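/- Fix Λ ∈ ℝ and real parameters α, β, c, and let r_A = α(−K_2∧K_3 + J_2∧J_3) + β(−K_2∧J_3 + K_3∧J_2) + (c/2) K_1∧J_1 ∈ g_Λ ∧ g_Λ (the Type A classical r-matrix of the Lorentz algebra). Then the Schouten bracket [[r_A,r_A]] is invariant under the adjoint action of all of g_Λ (i.e. X·[[r_A,r_A]] = 0 for every X ∈ g_Λ, where X acts diagonally on g_Λ⊗g_Λ⊗g_Λ) if and only if α = β = 0; in that case r_A = (c/2)K_1∧J_1 and [[r_A,r_A]] = 0. -/
import Mathlib


namespace NCST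

noncomputable section

/-- The underlying 10-dimensional vector space of `g_Λ`, with basis indices
`0,1,2,3 ↦ P_0,P_1,P_2,P_3`, `4,5,6 ↦ K_1,K_2,K_3`, `7,8,9 ↦ J_1,J_2,J_3`. -/
abbrev V : Type := Fin 10 → ℝ

/-- The `i`-th basis vector. -/
def e (i : Fin 10) : V := Pi.single i 1

/-- The Levi-Civita symbol on `{1,2,3}` (indices shifted to `Fin 3`), `ε_{123} = 1`. -/
def eps (a b c : Fin 3) : ℝ :=
  if (a = 0 ∧ b = 1 ∧ c = 2) ∨ (a = 1 ∧ b = 2 ∧ c = 0) ∨ (a = 2 ∧ b = 0 ∧ c = 1) then 1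
  else if (a = 2 ∧ b = 1 ∧ c = 0) ∨ (a = 1 ∧ b = 0 ∧ c = 2) ∨ (a = 0 ∧ b = 2 ∧ c = 1) then -1
  else 0

/-- Translation generators `P_μ`, `μ = 0,1,2,3`. -/
def Pv (μ : Fin 4) : V := e ⟨μ.1, by have := μ.isLt; omega⟩
/-- Boost generators `K_a`, `a = 1,2,3` (index `a+1` in `Fin 3`-terms). -/
def Kv (a : Fin 3) : V := e ⟨a.1 + 4, by have := a.isLt; omega⟩
/-- Rotation generators `J_a`, `a = 1,2,3`. -/
def Jv (a : Fin 3) : V := e ⟨a.1 + 7, by have := a.isLt; omega⟩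

/-- Labels for the kinematical basis generators. -/
inductive Gen : Type
  | P : Fin 4 → Gen
  | K : Fin 3 → Gen
  | J : Fin 3 → Gen

/-- `[K_a, P_μ]`: equals `P_a` if `μ = 0` and `δ_{ab} P_0` if `μ = b ∈ {1,2,3}`. -/
def KPbra (a : Fin 3) (μ : Fin 4) : V :=
  if μ.1 = 0 then Pv ⟨a.1 + 1, by have := a.isLt; omega⟩
  else if μ.1 = a.1 + 1 then Pv 0 else 0

/-- `[J_a, P_μ]`: equals `0` if `μ = 0` and `ε_{abc} P_c` if `μ = b ∈ {1,2,3}`. -/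
def JPbra (a : Fin 3) (μ : Fin 4) : V :=
  if h : μ.1 = 0 then 0
  else ∑ c : Fin 3, eps a ⟨μ.1 - 1, by have := μ.isLt; omega⟩ c •
    Pv ⟨c.1 + 1, by have := c.isLt; omega⟩

/-- `[P_μ, P_ν]`: `[P_0,P_a] = -Λ K_a`, `[P_a,P_b] = Λ ε_{abc} J_c`. -/
def PPbra (Λ : ℝ) (μ ν : Fin 4) : V :=
  if _hμ : μ.1 = 0 then
    (if _hν : ν.1 = 0 then 0 else (-Λ) • Kv ⟨ν.1 - 1, by have := ν.isLt; omega⟩)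
  else if _hν : ν.1 = 0 then Λ • Kv ⟨μ.1 - 1, by have := μ.isLt; omega⟩
  else Λ • ∑ c : Fin 3, eps ⟨μ.1 - 1, by have := μ.isLt; omega⟩
    ⟨ν.1 - 1, by have := ν.isLt; omega⟩ c • Jv c

/-- `[K_a, K_b] = -ε_{abc} J_c`. -/
def KKbra (a b : Fin 3) : V := -∑ c : Fin 3, eps a b c • Jv c
/-- `[J_a, K_b] = ε_{abc} K_c`. -/
def JKbra (a b : Fin 3) : V := ∑ c : Fin 3, eps a b c • Kv c
/-- `[J_a, J_b] = ε_{abc} J_c`. -/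
def JJbra (a b : Fin 3) : V := ∑ c : Fin 3, eps a b c • Jv c

/-- The bracket of two basis generators of `g_Λ`, as in eq. (1) of the paper. -/
def genBra (Λ : ℝ) : Gen → Gen → V
  | .P μ, .P ν => PPbra Λ μ ν
  | .P μ, .K a => -KPbra a μ
  | .P μ, .J a => -JPbra a μ
  | .K a, .P μ => KPbra a μ
  | .K a, .K b => KKbra a b
  | .K a, .J b => -JKbra b a
  | .J a, .P μ => JPbra a μ
  | .J a, .K b => JKbra a b
  | .J a, .J b => JJbra a b

/-- Decoding of a `Fin 10` index into the corresponding generator label. -/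
def idxGen (i : Fin 10) : Gen :=
  if h : i.1 < 4 then .P ⟨i.1, h⟩
  else if h2 : i.1 < 7 then .K ⟨i.1 - 4, by omega⟩
  else .J ⟨i.1 - 7, by have := i.isLt; omega⟩

/-- The bracket of `g_Λ`, extended bilinearly from the structure constants. -/
def bra (Λ : ℝ) (x y : V) : V :=
  ∑ i : Fin 10, ∑ j : Fin 10, (x i * y j) • genBra Λ (idxGen i) (idxGen j)

/-- Coefficients of elements of `g_Λ ⊗ g_Λ` in the basis `e_i ⊗ e_j`. -/
abbrev T2 : Type := Fin 10 → Fin 10 → ℝ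
/-- Coefficients of elements of `g_Λ ⊗ g_Λ ⊗ g_Λ`. -/
abbrev T3 : Type := Fin 10 → Fin 10 → Fin 10 → ℝ

/-- The diagonal adjoint action `X·(a⊗b) = [X,a]⊗b + a⊗[X,b]` on `g_Λ ⊗ g_Λ`,
in coordinates; `adT Λ X r` is the cocommutator `δ_r(X)`. -/
def adT (Λ : ℝ) (X : V) (r : T2) : T2 :=
  fun k l => (∑ i : Fin 10, r i l * bra Λ X (e i) k) +
    ∑ j : Fin 10, r k j * bra Λ X (e j) l

/-- `x ∧ y := x ⊗ y - y ⊗ x`, in coordinates. -/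
def wedge (x y : V) : T2 := fun i j => x i * y j - x j * y i

/-- The wedge `e_i ∧ e_j` of two basis vectors. -/
def wEl (i j : Fin 10) : T2 := wedge (e i) (e j)

/-- The Schouten bracket `[[r,r]]` of `r ∈ g_Λ ⊗ g_Λ`, in coordinates:
`[[r,r]] = [r_{12},r_{13}] + [r_{12},r_{23}] + [r_{13},r_{23}]`, i.e. for
`r = Σ aᵢ⊗bᵢ`, `[[r,r]] = Σᵢⱼ ([aᵢ,aⱼ]⊗bᵢ⊗bⱼ + aᵢ⊗[bᵢ,aⱼ]⊗bⱼ + aᵢ⊗aⱼ⊗[bᵢ,bⱼ])`. -/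
def schouten (Λ : ℝ) (r : T2) : T3 :=
  fun p q s =>
    ∑ i : Fin 10, ∑ j : Fin 10, ∑ k : Fin 10, ∑ l : Fin 10, r i j * r k l *
      (bra Λ (e i) (e k) p * (if j = q then (1:ℝ) else 0) * (if l = s then (1:ℝ) else 0)
      + (if i = p then (1:ℝ) else 0) * bra Λ (e j) (e k) q * (if l = s then (1:ℝ) else 0)
      + (if i = p then (1:ℝ) else 0) * (if k = q then (1:ℝ) else 0) * bra Λ (e j) (e l) s)

/-- The diagonal adjoint action of `X ∈ g_Λ` on `g_Λ ⊗ g_Λ ⊗ g_Λ`, in coordinates. -/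
def adT3 (Λ : ℝ) (X : V) (T : T3) : T3 :=
  fun p q s => (∑ i : Fin 10, T i q s * bra Λ X (e i) p)
    + (∑ j : Fin 10, T p j s * bra Λ X (e j) q)
    + ∑ k : Fin 10, T p q k * bra Λ X (e k) s

/-- The Type A classical `r`-matrix of the Lorentz algebra:
`r_A = α(−K_2∧K_3 + J_2∧J_3) + β(−K_2∧J_3 + K_3∧J_2) + (c/2) K_1∧J_1`. -/
def rA (α β c : ℝ) : T2 :=
  α • (-(wEl 5 6) + wEl 8 9) + β • (-(wEl 5 9) + wEl 6 8) + (c / 2) • wEl 4 7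

section
lemma bra_e (Λ : ℝ) (i j : Fin 10) :
    bra Λ (e i) (e j) = genBra Λ (idxGen i) (idxGen j) := by
  funext k
  simp [bra, e, Pi.single_apply, Finset.sum_apply, ite_mul, mul_ite, zero_mul, mul_zero,
    one_mul, mul_one, ite_smul, zero_smul, one_smul, ite_apply, Pi.zero_apply,
    Finset.sum_ite_eq, Finset.sum_ite_eq']

lemma schouten_eq (Λ : ℝ) (r : T2) (p q s : Fin 10) :
    schouten Λ r p q s =
      (∑ i : Fin 10, ∑ k : Fin 10, r i q * r k s * bra Λ (e i) (e k) p)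
      + (∑ j : Fin 10, ∑ k : Fin 10, r p j * r k s * bra Λ (e j) (e k) q)
      + (∑ j : Fin 10, ∑ l : Fin 10, r p j * r q l * bra Λ (e j) (e l) s) := by
  simp only [schouten, mul_add, Finset.sum_add_distrib, mul_ite, ite_mul, mul_zero, zero_mul,
    mul_one, one_mul, Finset.sum_ite_irrel, Finset.sum_const_zero, Finset.sum_ite_eq,
    Finset.sum_ite_eq', Finset.mem_univ, if_true]


end
section
lemma sum10 {M : Type*} [AddCommMonoid M] (f : Fin 10 → M) :
    ∑ i, f i = f 0 + f 1 + f 2 + f 3 + f 4 + f 5 + f 6 + f 7 + f 8 + f 9 := by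
  rw [Fin.sum_univ_castSucc, Fin.sum_univ_castSucc, Fin.sum_univ_eight]; rfl
end
section
set_option maxHeartbeats 1600000

lemma idxG0 : idxGen 0 = Gen.P 0 := rfl
lemma idxG1 : idxGen 1 = Gen.P 1 := rfl
lemma idxG2 : idxGen 2 = Gen.P 2 := rfl
lemma idxG3 : idxGen 3 = Gen.P 3 := rfl
lemma idxG4 : idxGen 4 = Gen.K 0 := rfl
lemma idxG5 : idxGen 5 = Gen.K 1 := rfl
lemma idxG6 : idxGen 6 = Gen.K 2 := rfl
lemma idxG7 : idxGen 7 = Gen.J 0 := rfl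
lemma idxG8 : idxGen 8 = Gen.J 1 := rfl
lemma idxG9 : idxGen 9 = Gen.J 2 := rfl

-- column/row collapse lemmas for rA
lemma col5 (α β c : ℝ) (X : Fin 10 → ℝ) :
    (∑ i : Fin 10, rA α β c i 5 * X i) = α * X 6 + β * X 9 := by
  rw [sum10]; simp [rA, wEl, wedge, e, Pi.single_apply]; try ring
lemma col6 (α β c : ℝ) (X : Fin 10 → ℝ) :
    (∑ i : Fin 10, rA α β c i 6 * X i) = -(α * X 5) - β * X 8 := by
  rw [sum10]; simp [rA, wEl, wedge, e, Pi.single_apply]; try ring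
lemma col9 (α β c : ℝ) (X : Fin 10 → ℝ) :
    (∑ i : Fin 10, rA α β c i 9 * X i) = -(β * X 5) + α * X 8 := by
  rw [sum10]; simp [rA, wEl, wedge, e, Pi.single_apply]; try ring
lemma row4 (α β c : ℝ) (X : Fin 10 → ℝ) :
    (∑ j : Fin 10, rA α β c 4 j * X j) = c / 2 * X 7 := by
  rw [sum10]; simp [rA, wEl, wedge, e, Pi.single_apply]; try ring
lemma row5 (α β c : ℝ) (X : Fin 10 → ℝ) :
    (∑ j : Fin 10, rA α β c 5 j * X j) = -(α * X 6) - β * X 9 := by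
  rw [sum10]; simp [rA, wEl, wedge, e, Pi.single_apply]; try ring

lemma S456 (Λ α β c : ℝ) : schouten Λ (rA α β c) 4 5 6 = 2 * (α * β) := by
  rw [schouten_eq]
  simp only [mul_assoc, ← Finset.mul_sum]
  rw [col5, row4, row4, col6, col6, col6, row5]
  simp only [bra_e, idxG0, idxG1, idxG2, idxG3, idxG4, idxG5, idxG6, idxG7, idxG8, idxG9]
  simp [genBra, KPbra, JPbra, PPbra, KKbra, JKbra, JJbra, eps,
    Fin.sum_univ_three, Pv, Kv, Jv, e, Pi.single_apply, Finset.sum_apply, Pi.smul_apply,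
    Pi.neg_apply, Fin.mk.injEq]
  try ring

lemma S459 (Λ α β c : ℝ) : schouten Λ (rA α β c) 4 5 9 = β ^ 2 - α ^ 2 := by
  rw [schouten_eq]
  simp only [mul_assoc, ← Finset.mul_sum]
  rw [col5, row4, row4, col9, col9, col9, row5]
  simp only [bra_e, idxG0, idxG1, idxG2, idxG3, idxG4, idxG5, idxG6, idxG7, idxG8, idxG9]
  simp [genBra, KPbra, JPbra, PPbra, KKbra, JKbra, JJbra, eps,
    Fin.sum_univ_three, Pv, Kv, Jv, e, Pi.single_apply, Finset.sum_apply, Pi.smul_apply,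
    Pi.neg_apply, Fin.mk.injEq]
  try ring
end
section
set_option maxHeartbeats 1600000
lemma rA_a1 (α β c : ℝ) (j : Fin 10) : rA α β c 1 j = 0 := by
  simp [rA, wEl, wedge, e, Pi.single_apply]
lemma rA_b2 (α β c : ℝ) (i : Fin 10) : rA α β c i 2 = 0 := by
  simp [rA, wEl, wedge, e, Pi.single_apply]
lemma rA_b3 (α β c : ℝ) (i : Fin 10) : rA α β c i 3 = 0 := by
  simp [rA, wEl, wedge, e, Pi.single_apply]
lemma S126 (Λ α β c : ℝ) : schouten Λ (rA α β c) 1 2 6 = 0 := by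
  simp [schouten_eq, rA_a1, rA_b2]
lemma S153 (Λ α β c : ℝ) : schouten Λ (rA α β c) 1 5 3 = 0 := by
  simp [schouten_eq, rA_a1, rA_b3]
lemma S129 (Λ α β c : ℝ) : schouten Λ (rA α β c) 1 2 9 = 0 := by
  simp [schouten_eq, rA_a1, rA_b2]
end
section
set_option maxHeartbeats 1600000

lemma v3 : ((3 : Fin 4) : ℕ) = 3 := rfl

lemma braz44 (Λ : ℝ) : bra Λ (e 4) (e 4) = 0 := by
  funext k
  rw [bra_e]
  simp [idxG4, idxG7, genBra, KKbra, JKbra, JJbra, eps, Fin.sum_univ_three, Kv, Jv, e,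
    Pi.single_apply]
lemma braz47 (Λ : ℝ) : bra Λ (e 4) (e 7) = 0 := by
  funext k
  rw [bra_e]
  simp [idxG4, idxG7, genBra, KKbra, JKbra, JJbra, eps, Fin.sum_univ_three, Kv, Jv, e,
    Pi.single_apply]
lemma braz74 (Λ : ℝ) : bra Λ (e 7) (e 4) = 0 := by
  funext k
  rw [bra_e]
  simp [idxG4, idxG7, genBra, KKbra, JKbra, JJbra, eps, Fin.sum_univ_three, Kv, Jv, e,
    Pi.single_apply]
lemma braz77 (Λ : ℝ) : bra Λ (e 7) (e 7) = 0 := by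
  funext k
  rw [bra_e]
  simp [idxG4, idxG7, genBra, KKbra, JKbra, JJbra, eps, Fin.sum_univ_three, Kv, Jv, e,
    Pi.single_apply]

lemma col0 (c : ℝ) (q : Fin 10) (X : Fin 10 → ℝ) :
    (∑ i : Fin 10, rA 0 0 c i q * X i) = c / 2 * (e 7 q * X 4 - e 4 q * X 7) := by
  rw [sum10]; simp [rA, wEl, wedge, e, Pi.single_apply, mul_ite, ite_mul, mul_zero, zero_mul]
  split_ifs <;> ring
lemma row0 (c : ℝ) (p : Fin 10) (X : Fin 10 → ℝ) :
    (∑ j : Fin 10, rA 0 0 c p j * X j) = c / 2 * (e 4 p * X 7 - e 7 p * X 4) := by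
  rw [sum10]; simp [rA, wEl, wedge, e, Pi.single_apply, mul_ite, ite_mul, mul_zero, zero_mul]
  split_ifs <;> ring

lemma schouten_zero (Λ c : ℝ) : schouten Λ (rA 0 0 c) = 0 := by
  funext p q s
  rw [schouten_eq]
  simp only [mul_assoc, ← Finset.mul_sum]
  simp only [col0, row0]
  simp [braz44, braz47, braz74, braz77]

lemma adT3_eq1 (Λ α β c : ℝ) :
    adT3 Λ (e 0) (schouten Λ (rA α β c)) 1 5 6
      = -(schouten Λ (rA α β c) 4 5 6) - Λ * schouten Λ (rA α β c) 1 2 6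
        - Λ * schouten Λ (rA α β c) 1 5 3 := by
  simp only [adT3]
  rw [sum10, sum10, sum10]
  simp only [bra_e, idxG0, idxG1, idxG2, idxG3, idxG4, idxG5, idxG6, idxG7, idxG8, idxG9]
  simp [genBra, KPbra, JPbra, PPbra, KKbra, JKbra, JJbra, eps, Fin.sum_univ_three, v3,
    Pv, Kv, Jv, e, Pi.single_apply, Finset.sum_apply, Pi.smul_apply, Pi.neg_apply, Fin.mk.injEq]
  try ring

lemma adT3_eq2 (Λ α β c : ℝ) :
    adT3 Λ (e 0) (schouten Λ (rA α β c)) 1 5 9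
      = -(schouten Λ (rA α β c) 4 5 9) - Λ * schouten Λ (rA α β c) 1 2 9 := by
  simp only [adT3]
  rw [sum10, sum10, sum10]
  simp only [bra_e, idxG0, idxG1, idxG2, idxG3, idxG4, idxG5, idxG6, idxG7, idxG8, idxG9]
  simp [genBra, KPbra, JPbra, PPbra, KKbra, JKbra, JJbra, eps, Fin.sum_univ_three, v3,
    Pv, Kv, Jv, e, Pi.single_apply, Finset.sum_apply, Pi.smul_apply, Pi.neg_apply, Fin.mk.injEq]
  try ring
end

/-- `[[r_A,r_A]]` is `g_Λ`-invariant iff `α = β = 0`; in that case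
`r_A = (c/2) K_1∧J_1` and `[[r_A,r_A]] = 0`. -/
theorem rA_schouten_invariant_iff (Λ α β c : ℝ) :
    ((∀ X : V, adT3 Λ X (schouten Λ (rA α β c)) = 0) ↔ (α = 0 ∧ β = 0)) ∧
    (α = 0 → β = 0 →
      rA α β c = (c / 2) • wEl 4 7 ∧ schouten Λ (rA α β c) = 0) := by
  constructor
  · constructor
    · intro h
      have h1 := congrFun (congrFun (congrFun (h (e 0)) 1) 5) 6
      have h2 := congrFun (congrFun (congrFun (h (e 0)) 1) 5) 9
      rw [adT3_eq1, S456, S126, S153] at h1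
      rw [adT3_eq2, S459, S129] at h2
      simp only [Pi.zero_apply, mul_zero, sub_zero] at h1 h2
      have hab : α * β = 0 := by linarith
      have hsq : β ^ 2 = α ^ 2 := by linarith
      rcases mul_eq_zero.mp hab with hα | hβ
      · refine ⟨hα, ?_⟩
        have : β ^ 2 = 0 := by rw [hsq, hα]; ring
        exact pow_eq_zero_iff two_ne_zero |>.mp this
      · have hα : α ^ 2 = 0 := by rw [← hsq, hβ]; ring
        have hα' : α = 0 := pow_eq_zero_iff two_ne_zero |>.mp hα
        exact ⟨hα', hβ⟩
    · rintro ⟨hα, hβ⟩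
      subst hα; subst hβ
      intro X
      rw [schouten_zero]
      funext p q s
      simp [adT3]
  · intro hα hβ
    subst hα; subst hβ
    refine ⟨?_, schouten_zero Λ c⟩
    simp [rA]
end
end NCST
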